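/- For n ≥ 2, if F is a family of simple graphs on the vertex set {1,...,n} such that for all G, H ∈ F the intersection graph G ∩ H (on the same vertex set, with edge set E(G) ∩ E(H)) is connected, then |F| ≤ 2^(C(n,2)) / 2^(n-1). -/

import Mathlib

open Classical in
/-- Edge-indicator vector of a graph. -/
noncomputable def edgeVec {n : ℕ} (G : SimpleGraph (Fin n)) :
    {e : Sym2 (Fin n) // ¬ e.IsDiag} → ZMod 2 :=
  fun e => if e.1 ∈ G.edgeSet then 1 else 0

/-- The cut map: a vertex subset (as a 0/1 vector) to its cut's indicator vector. -/
noncomputable def cutMap (n : ℕ) :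
    (Fin n → ZMod 2) →ₗ[ZMod 2] ({e : Sym2 (Fin n) // ¬ e.IsDiag} → ZMod 2) where
  toFun x := fun e => Sym2.lift ⟨fun a b => x a + x b, fun a b => by ring⟩ e.1
  map_add' x y := by
    funext e
    obtain ⟨s, hs⟩ := e
    induction s using Sym2.ind with
    | _ a b => simp [Sym2.lift_mk]; ring
  map_smul' c x := by
    funext e
    obtain ⟨s, hs⟩ := e
    induction s using Sym2.ind with
    | _ a b => simp [Sym2.lift_mk]; ring

lemma cutMap_mk {n : ℕ} (x : Fin n → ZMod 2) (a b : Fin n) (h : ¬ (s(a,b) : Sym2 (Fin n)).IsDiag) :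
    cutMap n x ⟨s(a,b), h⟩ = x a + x b := rfl

theorem connected_intersecting_bound (n : ℕ) (hn : 2 ≤ n)
    (F : Set (SimpleGraph (Fin n)))
    (hF : ∀ G ∈ F, ∀ H ∈ F, (G ⊓ H).Connected) :
    F.ncard ≤ 2 ^ n.choose 2 / 2 ^ (n - 1) := by
  classical
  set V := ({e : Sym2 (Fin n) // ¬ e.IsDiag} → ZMod 2)
  set D : Submodule (ZMod 2) V := LinearMap.range (cutMap n) with hD
  -- key injectivity
  have key : ∀ G ∈ F, ∀ H ∈ F,
      (Submodule.Quotient.mk (edgeVec G) : V ⧸ D) = Submodule.Quotient.mk (edgeVec H) →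
      G = H := by
    intro G hG H hH hq
    rw [Submodule.Quotient.eq] at hq
    obtain ⟨x, hx⟩ := hq
    -- x is constant on edges of G ⊓ H
    have hadj : ∀ a b : Fin n, (G ⊓ H).Adj a b → x a = x b := by
      intro a b hab
      have hnd : ¬ (s(a,b) : Sym2 (Fin n)).IsDiag := by
        simp [Sym2.isDiag_iff_proj_eq, hab.ne]
      have h1 : edgeVec G ⟨s(a,b), hnd⟩ = 1 := by
        simp [edgeVec, SimpleGraph.mem_edgeSet, hab.1]
      have h2 : edgeVec H ⟨s(a,b), hnd⟩ = 1 := by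
        simp [edgeVec, SimpleGraph.mem_edgeSet, hab.2]
      have := congrFun hx ⟨s(a,b), hnd⟩
      rw [cutMap_mk] at this
      have : x a + x b = 0 := by
        rw [this, Pi.sub_apply, h1, h2, sub_self]
      have hxa : x a = - x b := by linear_combination this
      rwa [CharTwo.neg_eq] at hxa
    have hconn := hF G hG H hH
    have hconst : ∀ a b : Fin n, x a = x b := by
      intro a b
      obtain ⟨w⟩ := hconn.preconnected a b
      induction w with
      | nil => rfl
      | cons h _ ih => exact (hadj _ _ h).trans ih
    have hx0 : cutMap n x = 0 := by
      funext e
      obtain ⟨s, hs⟩ := e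
      induction s using Sym2.ind with
      | _ a b =>
        rw [cutMap_mk, hconst a b, CharTwo.add_self_eq_zero]
        rfl
    have hEV : edgeVec G = edgeVec H := by
      rw [hx0] at hx
      exact sub_eq_zero.mp hx.symm
    ext a b
    by_cases hab : a = b
    · subst hab; simp
    have hnd : ¬ (s(a,b) : Sym2 (Fin n)).IsDiag := by
      simp [Sym2.isDiag_iff_proj_eq, hab]
    have := congrFun hEV ⟨s(a,b), hnd⟩
    simp only [edgeVec, SimpleGraph.mem_edgeSet] at this
    constructor
    · intro h
      by_contra h'
      simp [h, h'] at this
    · intro h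
      by_contra h'
      simp [h, h'] at this
  -- injection into the quotient
  have hle : F.ncard ≤ Nat.card (V ⧸ D) := by
    rw [← Nat.card_coe_set_eq]
    exact Nat.card_le_card_of_injective
      (fun g : F => (Submodule.Quotient.mk (edgeVec g.1) : V ⧸ D))
      (fun g h hgh => Subtype.ext (key _ g.2 _ h.2 hgh))
  -- cardinality computations
  have cardV : Nat.card V = 2 ^ n.choose 2 := by
    rw [Nat.card_fun]
    congr 1
    · simp [Nat.card_eq_fintype_card]
    · rw [Nat.card_eq_fintype_card, Sym2.card_subtype_not_diag, Fintype.card_fin]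
  have cardKer : Nat.card (LinearMap.ker (cutMap n)) = 2 := by
    have h0 : (0 : ℕ) < n := by omega
    have hbij : Function.Bijective
        (fun x : LinearMap.ker (cutMap n) => x.1 ⟨0, h0⟩) := by
      constructor
      · rintro ⟨x, hx⟩ ⟨y, hy⟩ hxy
        simp only at hxy
        have hconst : ∀ (z : Fin n → ZMod 2), z ∈ LinearMap.ker (cutMap n) →
            ∀ v, z v = z ⟨0, h0⟩ := by
          intro z hz v
          by_cases hv : v = ⟨0, h0⟩
          · rw [hv]
          · have hnd : ¬ (s(v, (⟨0, h0⟩ : Fin n)) : Sym2 (Fin n)).IsDiag := by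
              simp [Sym2.isDiag_iff_proj_eq, hv]
            have := congrFun (LinearMap.mem_ker.mp hz) ⟨s(v, ⟨0, h0⟩), hnd⟩
            rw [cutMap_mk, Pi.zero_apply] at this
            have : z v = - z ⟨0, h0⟩ := by linear_combination this
            rwa [CharTwo.neg_eq] at this
        apply Subtype.ext
        funext v
        show x v = y v
        rw [hconst x hx v, hconst y hy v, hxy]
      · intro c
        refine ⟨⟨fun _ => c, ?_⟩, rfl⟩
        rw [LinearMap.mem_ker]
        funext e
        obtain ⟨s, hs⟩ := e
        induction s using Sym2.ind with
        | _ a b =>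
          rw [cutMap_mk, CharTwo.add_self_eq_zero]
          rfl
    rw [Nat.card_eq_of_bijective _ hbij, Nat.card_eq_fintype_card, ZMod.card]
  have cardD : Nat.card D = 2 ^ (n - 1) := by
    have e1 := (LinearMap.quotKerEquivRange (cutMap n)).toEquiv
    have h1 : Nat.card ((Fin n → ZMod 2) ⧸ LinearMap.ker (cutMap n)) = Nat.card D :=
      Nat.card_congr e1
    have h2 : Nat.card (Fin n → ZMod 2) =
        Nat.card ((Fin n → ZMod 2) ⧸ LinearMap.ker (cutMap n)) *
          Nat.card (LinearMap.ker (cutMap n)) :=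
      AddSubgroup.card_eq_card_quotient_mul_card_addSubgroup _
    have h3 : Nat.card (Fin n → ZMod 2) = 2 ^ n := by
      rw [Nat.card_fun]
      simp [Nat.card_eq_fintype_card]
    rw [← h1]
    rw [h3, cardKer] at h2
    have : Nat.card ((Fin n → ZMod 2) ⧸ LinearMap.ker (cutMap n)) = 2 ^ n / 2 := by
      omega
    rw [this]
    rw [show n = (n - 1) + 1 by omega, pow_succ]
    simp
  have cardQ : Nat.card (V ⧸ D) = 2 ^ n.choose 2 / 2 ^ (n - 1) := by
    have h2 : Nat.card V = Nat.card (V ⧸ D) * Nat.card D :=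
      AddSubgroup.card_eq_card_quotient_mul_card_addSubgroup _
    rw [cardV, cardD] at h2
    have hpos : (0:ℕ) < 2 ^ (n-1) := Nat.pow_pos (by norm_num)
    exact (Nat.div_eq_of_eq_mul_left hpos h2).symm
  rw [← cardQ]
  exact hle
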